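/- arXiv:0904.0299 — 2 statements merged into one kernel-verified Lean document; each statement's English description precedes it below -/
import Mathlib

section
/- Let n > m ≥ 1 be integers, H ≥ 0 a real number, and let w : ℝ → ℝ be a twice differentiable positive function satisfying the ordinary differential equation w″(s) = w(s)·[ (n−m)(w(s)^{−n}+H)^{(2−m)/m}/(m·w(s)ⁿ) − H(w(s)^{−n}+H)^{(2−m)/m} − 1 ] for all s. Then the function s ↦ (w′(s))² + w(s)²(w(s)^{−n}+H)^{2/m} + w(s)² is constant on ℝ, and this constant is positive. -/
open Real Set Filter MeasureTheory

/-- First integral (3.23) of the ODE (3.17)/(3.22): for a positive twice differentiable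
solution `w` of the second-order ODE, the quantity
`(w')² + w²(w^{-n}+H)^{2/m} + w²` is a positive constant. -/
theorem first_integral_of_ode (n m : ℕ) (hm : 1 ≤ m) (hmn : m < n) (H : ℝ) (hH : 0 ≤ H)
    (w w' w'' : ℝ → ℝ) (hw : ∀ s, 0 < w s)
    (hw1 : ∀ s, HasDerivAt w (w' s) s) (hw2 : ∀ s, HasDerivAt w' (w'' s) s)
    (hode : ∀ s, w'' s = w s *
      (((n : ℝ) - m) * (w s ^ (-(n : ℝ)) + H) ^ (((2 : ℝ) - m) / m) / (m * w s ^ (n : ℝ))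
        - H * (w s ^ (-(n : ℝ)) + H) ^ (((2 : ℝ) - m) / m) - 1)) :
    ∃ c : ℝ, 0 < c ∧ ∀ s : ℝ,
      (w' s) ^ 2 + (w s) ^ 2 * (w s ^ (-(n : ℝ)) + H) ^ ((2 : ℝ) / m) + (w s) ^ 2 = c := by
  have hm0 : (m : ℝ) ≠ 0 := Nat.cast_ne_zero.mpr (by omega)
  set E : ℝ → ℝ := fun s =>
    (w' s) ^ 2 + (w s) ^ 2 * (w s ^ (-(n : ℝ)) + H) ^ ((2 : ℝ) / m) + (w s) ^ 2 with hE
  have hEderiv : ∀ s, HasDerivAt E 0 s := by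
    intro s
    have hx : 0 < w s := hw s
    have hv : 0 < w s ^ (-(n : ℝ)) + H :=
      add_pos_of_pos_of_nonneg (rpow_pos_of_pos hx _) hH
    have hinner : HasDerivAt (fun x => w x ^ (-(n : ℝ)) + H)
        (w' s * (-(n : ℝ)) * w s ^ (-(n : ℝ) - 1)) s :=
      ((hw1 s).rpow_const (Or.inl hx.ne')).add_const H
    have houter : HasDerivAt (fun x => (w x ^ (-(n : ℝ)) + H) ^ ((2 : ℝ) / m))
        (w' s * (-(n : ℝ)) * w s ^ (-(n : ℝ) - 1) * ((2 : ℝ) / m) *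
          (w s ^ (-(n : ℝ)) + H) ^ ((2 : ℝ) / m - 1)) s :=
      hinner.rpow_const (Or.inl hv.ne')
    have hsq : HasDerivAt (fun x => (w x) ^ 2) ((2 : ℕ) * w s ^ 1 * w' s) s := (hw1 s).pow 2
    have h1 : HasDerivAt (fun x => (w' x) ^ 2) ((2 : ℕ) * w' s ^ 1 * w'' s) s := (hw2 s).pow 2
    have hsum := (h1.add (hsq.mul houter)).add hsq
    convert hsum using 1
    case e'_4 => rfl
    case e'_5 => rfl
    case e'_8 => rfl
    rw [hode s]
    -- rpow identities
    set x := w s with hxdef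
    set P := x ^ (-(n : ℝ)) with hP
    have hP0 : 0 < P := rpow_pos_of_pos hx _
    have hxn : x ^ (n : ℝ) = P⁻¹ := by
      rw [hP, ← rpow_neg hx.le]
      rw [neg_neg]
    have hxn1 : x ^ (-(n : ℝ) - 1) = P / x := by
      rw [hP, rpow_sub hx, rpow_one]
    have hexp : ((2 : ℝ) - m) / m = (2 : ℝ) / m - 1 := by field_simp
    have hvA : (P + H) ^ ((2 : ℝ) / m) = (P + H) * (P + H) ^ ((2 : ℝ) / m - 1) := by
      nth_rewrite 1 [show (2 : ℝ) / m = 1 + ((2:ℝ)/m - 1) by ring]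
      rw [rpow_add hv, rpow_one]
    rw [hexp, hxn, hxn1, hvA]
    push_cast
    field_simp
    ring
  have hdiff : Differentiable ℝ E := fun s => (hEderiv s).differentiableAt
  have hconst : ∀ s, E s = E 0 :=
    fun s => is_const_of_deriv_eq_zero hdiff (fun t => (hEderiv t).deriv) s 0
  refine ⟨E 0, ?_, hconst⟩
  have hx : 0 < w 0 := hw 0
  have hv : 0 < w 0 ^ (-(n : ℝ)) + H :=
    add_pos_of_pos_of_nonneg (rpow_pos_of_pos hx _) hH
  have : 0 < (w 0) ^ 2 := by positivity
  have h2 : 0 ≤ (w 0) ^ 2 * (w 0 ^ (-(n : ℝ)) + H) ^ ((2 : ℝ) / m) := by positivity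
  simp only [hE]
  nlinarith [sq_nonneg (w' 0)]
end

section
/- For every real number h > 0, the improper integral ∫₀^{1/√(1+h²)} t·h / ((1−t²)·√(1−(1+h²)t²)) dt converges and equals arctan(1/h). -/
open Real Set Filter MeasureTheory

set_option maxHeartbeats 1000000

/-- Evaluation (5.13) of the limiting period integral: for `h > 0`,
`∫₀^{1/√(1+h²)} t h / ((1-t²)√(1-(1+h²)t²)) dt` converges and equals `arctan(1/h)`. -/
theorem limiting_period_integral (h : ℝ) (hh : 0 < h) :
    IntervalIntegrable
      (fun t : ℝ => t * h / ((1 - t ^ 2) * Real.sqrt (1 - (1 + h ^ 2) * t ^ 2)))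
      MeasureTheory.volume 0 (1 / Real.sqrt (1 + h ^ 2)) ∧
    ∫ t in (0 : ℝ)..(1 / Real.sqrt (1 + h ^ 2)),
        t * h / ((1 - t ^ 2) * Real.sqrt (1 - (1 + h ^ 2) * t ^ 2)) =
      Real.arctan (1 / h) := by
  have hA : (0:ℝ) < 1 + h ^ 2 := by positivity
  set a := Real.sqrt (1 + h ^ 2) with ha_def
  have ha0 : 0 < a := Real.sqrt_pos.mpr hA
  have ha2 : a ^ 2 = 1 + h ^ 2 := Real.sq_sqrt hA.le
  have ha1 : 1 < a := by nlinarith [sq_nonneg (a - 1), hh]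
  set b := 1 / a with hb_def
  have hb0 : 0 < b := by positivity
  have hb1 : b < 1 := by rw [hb_def, div_lt_one ha0]; exact ha1
  have hab : a * b = 1 := by rw [hb_def]; field_simp
  have hb2 : (1 + h ^ 2) * b ^ 2 = 1 := by
    rw [← ha2, hb_def]; field_simp
  -- integrability
  have hint : IntervalIntegrable
      (fun t : ℝ => t * h / ((1 - t ^ 2) * Real.sqrt (1 - (1 + h ^ 2) * t ^ 2)))
      MeasureTheory.volume 0 b := by
    set C := b * h / ((h ^ 2 / (1 + h ^ 2)) * (a * Real.sqrt b)) with hC_def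
    have hC0 : 0 < C := by positivity
    have hg : IntervalIntegrable (fun t : ℝ => C * (b - t) ^ (-(1/2) : ℝ))
        MeasureTheory.volume 0 b := by
      have := (intervalIntegral.intervalIntegrable_rpow'
        (a := 0) (b := b) (r := -(1/2)) (by norm_num)).comp_sub_left b
      simpa using (this.const_mul C).symm
    refine hg.mono_fun ?_ ?_
    · apply Measurable.aestronglyMeasurable
      apply Measurable.div
      · exact measurable_id.mul_const h
      · exact (measurable_const.sub (measurable_id.pow_const 2)).mul
          (Real.continuous_sqrt.measurable.comp
            (measurable_const.sub ((measurable_id.pow_const 2).const_mul _)))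
    · rw [uIoc_of_le hb0.le]
      filter_upwards [ae_restrict_mem measurableSet_Ioc] with t ht
      rcases eq_or_lt_of_le ht.2 with hteq | htb
      · rw [hteq, show (1:ℝ) - (1 + h ^ 2) * b ^ 2 = 0 from by nlinarith [hb2],
          Real.sqrt_zero, mul_zero, div_zero, sub_self,
          Real.zero_rpow (by norm_num : (-(1/2) : ℝ) ≠ 0), mul_zero]
      · have ht0 : 0 < t := ht.1
        have hbt : 0 < b - t := by linarith
        have hq : 0 < 1 - (1 + h ^ 2) * t ^ 2 := by nlinarith [hb2]
        have h1t : 0 < 1 - t ^ 2 := by nlinarith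
        have hs0 : 0 < Real.sqrt (1 - (1 + h ^ 2) * t ^ 2) := Real.sqrt_pos.mpr hq
        have key : t * h / ((1 - t ^ 2) * Real.sqrt (1 - (1 + h ^ 2) * t ^ 2))
            ≤ C * (b - t) ^ (-(1/2) : ℝ) := by
          have hrw : C * (b - t) ^ (-(1/2) : ℝ)
              = b * h / ((h ^ 2 / (1 + h ^ 2)) * (a * Real.sqrt b * Real.sqrt (b - t))) := by
            have hsb : 0 < Real.sqrt b := Real.sqrt_pos.mpr hb0
            have hsbt : 0 < Real.sqrt (b - t) := Real.sqrt_pos.mpr hbt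
            rw [Real.rpow_neg hbt.le, ← Real.sqrt_eq_rpow, hC_def]
            field_simp
          rw [hrw]
          have hs_lb : a * Real.sqrt b * Real.sqrt (b - t)
              ≤ Real.sqrt (1 - (1 + h ^ 2) * t ^ 2) := by
            have : a * Real.sqrt b * Real.sqrt (b - t)
                = Real.sqrt ((1 + h ^ 2) * b * (b - t)) := by
              rw [Real.sqrt_mul (by positivity), Real.sqrt_mul hA.le, ← ha2,
                Real.sqrt_sq ha0.le]
            rw [this]
            apply Real.sqrt_le_sqrt
            nlinarith [hb2]
          have hd : h ^ 2 / (1 + h ^ 2) ≤ 1 - t ^ 2 := by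
            rw [div_le_iff₀ hA]
            nlinarith [hb2, sq_nonneg t]
          apply div_le_div₀ (by positivity) (by nlinarith) (by positivity)
          apply mul_le_mul hd hs_lb (by positivity) h1t.le
        have hf0 : 0 ≤ t * h / ((1 - t ^ 2) * Real.sqrt (1 - (1 + h ^ 2) * t ^ 2)) := by
          positivity
        calc ‖t * h / ((1 - t ^ 2) * Real.sqrt (1 - (1 + h ^ 2) * t ^ 2))‖
            = t * h / ((1 - t ^ 2) * Real.sqrt (1 - (1 + h ^ 2) * t ^ 2)) :=
              Real.norm_of_nonneg hf0
          _ ≤ C * (b - t) ^ (-(1/2) : ℝ) := key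
          _ ≤ ‖C * (b - t) ^ (-(1/2) : ℝ)‖ := le_abs_self _
  refine ⟨hint, ?_⟩
  -- evaluation
  have hderiv : ∀ t ∈ Ioo (0:ℝ) b,
      HasDerivAt (fun t : ℝ => -Real.arctan (Real.sqrt (1 - (1 + h ^ 2) * t ^ 2) / h))
        (t * h / ((1 - t ^ 2) * Real.sqrt (1 - (1 + h ^ 2) * t ^ 2))) t := by
    intro t ht
    have ht0 : 0 < t := ht.1
    have htb : t < b := ht.2
    have hq : 0 < 1 - (1 + h ^ 2) * t ^ 2 := by nlinarith [hb2]
    have h1t : 0 < 1 - t ^ 2 := by nlinarith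
    have hs0 : 0 < Real.sqrt (1 - (1 + h ^ 2) * t ^ 2) := Real.sqrt_pos.mpr hq
    have hs2 : Real.sqrt (1 - (1 + h ^ 2) * t ^ 2) ^ 2 = 1 - (1 + h ^ 2) * t ^ 2 :=
      Real.sq_sqrt hq.le
    have d1 : HasDerivAt (fun t : ℝ => 1 - (1 + h ^ 2) * t ^ 2)
        (-((1 + h ^ 2) * (2 * t))) t := by
      simpa using ((hasDerivAt_pow 2 t).const_mul (1 + h ^ 2)).const_sub 1
    have d3 := (((d1.sqrt hq.ne').div_const h).arctan).neg
    refine d3.congr_deriv ?_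
    symm
    set s := Real.sqrt (1 - (1 + h ^ 2) * t ^ 2)
    have hsne : s ≠ 0 := hs0.ne'
    have h1tne : (1 : ℝ) - t ^ 2 ≠ 0 := h1t.ne'
    have hhne : h ≠ 0 := hh.ne'
    have hden : 1 + (s / h) ^ 2 = (1 + h ^ 2) * (1 - t ^ 2) / h ^ 2 := by
      field_simp
      nlinarith [hs2]
    rw [hden]
    field_simp
  have hcont : Continuous (fun t : ℝ => -Real.arctan (Real.sqrt (1 - (1 + h ^ 2) * t ^ 2) / h)) :=
    (Real.continuous_arctan.comp ((Real.continuous_sqrt.comp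
      (continuous_const.sub (continuous_const.mul (continuous_pow 2)))).div_const h)).neg
  rw [intervalIntegral.integral_eq_sub_of_hasDerivAt_of_tendsto hb0 hderiv hint
    ((hcont.tendsto 0).mono_left nhdsWithin_le_nhds)
    ((hcont.tendsto b).mono_left nhdsWithin_le_nhds)]
  rw [show (1:ℝ) - (1 + h ^ 2) * b ^ 2 = 0 from by nlinarith [hb2]]
  simp
end
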